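/- Let X be a set, d₁, d₂ two distances on it and m₁, m₂ two measures such that both (X,d₁,m₁) and (X,d₂,m₂) are complete separable length metric measure spaces with non-negative Borel measures finite on bounded sets and full support. Assume m₂ ≤ C·m₁ for some C > 0 and d₁ ≤ L·d₂ for some L > 0. Then the Sobolev classes satisfy S(X₁) ⊂ S(X₂), and for every f ∈ S(X₁) the inequality |Df|₂ ≤ L·|Df|₁ holds m₂-almost everywhere, where |Df|₁, |Df|₂ denote the minimal weak upper gradients in (X,d₁,m₁) and (X,d₂,m₂) respectively. -/

import Mathlib

open MeasureTheory Filter Set Metric Topology ENNReal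

noncomputable section

namespace MMS

/-- The space of continuous curves defined on `[0,1]` with values in `Z`. -/
abbrev Curve (Z : Type*) [MetricSpace Z] : Type _ := C(unitInterval, Z)

instance (Z : Type*) [MetricSpace Z] : MeasurableSpace (Curve Z) := borel _
instance (Z : Type*) [MetricSpace Z] : BorelSpace (Curve Z) := ⟨rfl⟩

/-- The projection of `ℝ` onto `[0,1]`. -/
def pr (t : ℝ) : unitInterval := Set.projIcc 0 1 zero_le_one t

variable {Z : Type*} [MetricSpace Z]

/-- The metric speed (metric derivative) of a curve at a point `t ∈ [0,1]`,
defined as `limsup_{s → t} dist (γ s) (γ t) / |s - t|`. -/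
def speed (γ : Curve Z) (t : unitInterval) : ℝ :=
  limsup (fun s : unitInterval => dist (γ s) (γ t) / dist s t) (𝓝[≠] t)

/-- The metric speed as a function of a real parameter. -/
def speedR (γ : Curve Z) (t : ℝ) : ℝ := speed γ (pr t)

/-- A curve is absolutely continuous if `dist (γ s) (γ t) ≤ ∫_s^t G` for some
integrable nonnegative `G`. -/
def IsAC (γ : Curve Z) : Prop :=
  ∃ G : ℝ → ℝ, (∀ t, 0 ≤ G t) ∧ IntegrableOn G (Icc (0:ℝ) 1) ∧
    ∀ s t : unitInterval, s ≤ t → dist (γ s) (γ t) ≤ ∫ r in (s : ℝ)..(t : ℝ), G r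

/-- A curve is in `AC²` if `dist (γ s) (γ t) ≤ ∫_s^t G` for some square-integrable
nonnegative `G`. -/
def IsAC2 (γ : Curve Z) : Prop :=
  ∃ G : ℝ → ℝ, (∀ t, 0 ≤ G t) ∧ MemLp G 2 (volume.restrict (Icc (0:ℝ) 1)) ∧
    ∀ s t : unitInterval, s ≤ t → dist (γ s) (γ t) ≤ ∫ r in (s : ℝ)..(t : ℝ), G r

/-- The kinetic energy `∫₀¹ |γ̇_t|² dt` of a curve. -/
def energyE (γ : Curve Z) : ℝ≥0∞ :=
  ∫⁻ t in Icc (0:ℝ) 1, ENNReal.ofReal ((speedR γ t) ^ 2)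

/-- The length `∫₀¹ |γ̇_t| dt` of a curve. -/
def lengthE (γ : Curve Z) : ℝ≥0∞ :=
  ∫⁻ t in Icc (0:ℝ) 1, ENNReal.ofReal (speedR γ t)

/-- Evaluation map. -/
def ev (t : unitInterval) : Curve Z → Z := fun γ => γ t

variable [MeasurableSpace Z]

/-- A test plan: a probability measure on curves, concentrated on `AC²` curves, with
finite total kinetic energy and marginals bounded by a constant multiple of `μ`. -/
structure IsTestPlan (μ : Measure Z) (π : Measure (Curve Z)) : Prop where
  prob : IsProbabilityMeasure π
  ac : ∀ᵐ γ ∂π, IsAC2 γ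
  finite_energy : ∫⁻ γ, energyE γ ∂π < ⊤
  compression : ∃ C : ℝ≥0∞, 0 < C ∧ C < ⊤ ∧ ∀ t : unitInterval, π.map (ev t) ≤ C • μ

/-- `G` is a weak upper gradient of `f`. -/
def IsWUG (μ : Measure Z) (f G : Z → ℝ) : Prop :=
  ∀ π : Measure (Curve Z), IsTestPlan μ π →
    ∫⁻ γ, ENNReal.ofReal |f (γ 1) - f (γ 0)| ∂π ≤
      ∫⁻ γ, (∫⁻ t in Icc (0:ℝ) 1, ENNReal.ofReal (G (γ (pr t)) * speedR γ t)) ∂π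

/-- Membership in the Sobolev class `S²`. -/
def MemS2 (μ : Measure Z) (f : Z → ℝ) : Prop :=
  Measurable f ∧ ∃ G : Z → ℝ, (∀ z, 0 ≤ G z) ∧ MemLp G 2 μ ∧ IsWUG μ f G

/-- Membership in the Sobolev space `W^{1,2} = S² ∩ L²`. -/
def MemW12 (μ : Measure Z) (f : Z → ℝ) : Prop :=
  MemLp f 2 μ ∧ MemS2 μ f

/-- `G` is the minimal weak upper gradient `|Df|` of `f`. -/
def IsMinWUG (μ : Measure Z) (f G : Z → ℝ) : Prop :=
  (∀ z, 0 ≤ G z) ∧ MemLp G 2 μ ∧ IsWUG μ f G ∧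
    ∀ G' : Z → ℝ, (∀ z, 0 ≤ G' z) → MemLp G' 2 μ → IsWUG μ f G' → ∀ᵐ z ∂μ, G z ≤ G' z

/-- Membership in `L²_loc`. -/
def MemL2loc (μ : Measure Z) (G : Z → ℝ) : Prop :=
  ∀ (z : Z) (r : ℝ), MemLp G 2 (μ.restrict (ball z r))

/-- Membership in the local Sobolev class `S²_loc`. -/
def MemS2loc (μ : Measure Z) (f : Z → ℝ) : Prop :=
  Measurable f ∧ ∃ G : Z → ℝ, (∀ z, 0 ≤ G z) ∧ MemL2loc μ G ∧ IsWUG μ f G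

/-- `G` is the minimal weak upper gradient of `f ∈ S²_loc`. -/
def IsMinWUGloc (μ : Measure Z) (f G : Z → ℝ) : Prop :=
  (∀ z, 0 ≤ G z) ∧ MemL2loc μ G ∧ IsWUG μ f G ∧
    ∀ G' : Z → ℝ, (∀ z, 0 ≤ G' z) → MemL2loc μ G' → IsWUG μ f G' → ∀ᵐ z ∂μ, G z ≤ G' z

/-- A length space: the distance is the infimum of lengths of absolutely continuous
curves joining two given points. -/
def IsLengthSpace (Z : Type*) [MetricSpace Z] : Prop :=
  ∀ x y : Z, ENNReal.ofReal (dist x y)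
    = ⨅ (γ : Curve Z) (_ : IsAC γ ∧ γ 0 = x ∧ γ 1 = y), lengthE γ

/-- The measure is finite on bounded sets and has full support. -/
def GoodMeasure (μ : Measure Z) : Prop :=
  (∀ s : Set Z, Bornology.IsBounded s → μ s < ⊤) ∧
    ∀ (z : Z) (r : ℝ), 0 < r → 0 < μ (ball z r)



section AuxLemmas

lemma real_limsup_bot {α : Type*} (u : α → ℝ) : limsup u (⊥ : Filter α) = 0 := by
  rw [limsup_eq]
  have h : {a : ℝ | ∀ᶠ n in (⊥ : Filter α), u n ≤ a} = univ := by ext a; simp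
  rw [h, csInf_of_not_bddBelow not_bddBelow_univ, Real.sInf_empty]

variable {Z : Type*} [MetricSpace Z]

lemma speed_nonneg (γ : Curve Z) (t : unitInterval) : 0 ≤ speed γ t := by
  by_cases h : (𝓝[≠] t).NeBot
  · rw [speed, limsup_eq]
    apply Real.sInf_nonneg
    intro a ha
    simp only [Set.mem_setOf_eq] at ha
    obtain ⟨s, hs⟩ := ha.exists
    exact le_trans (div_nonneg dist_nonneg dist_nonneg) hs
  · rw [not_neBot] at h
    rw [speed, h, real_limsup_bot]

lemma limsup_le_mul_limsup {α : Type*} {F : Filter α} {u v : α → ℝ} {L : ℝ}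
    (hL : 0 < L) (hu0 : ∀ s, 0 ≤ u s) (huv : ∀ s, u s ≤ L * v s)
    (hbv : IsBoundedUnder (· ≤ ·) F v) :
    limsup u F ≤ L * limsup v F := by
  by_cases hne : F.NeBot
  · have hcu : IsCoboundedUnder (· ≤ ·) F u := isCoboundedUnder_le_of_le F hu0
    apply _root_.le_of_forall_pos_le_add
    intro ε hε
    have hδ : 0 < ε / L := div_pos hε hL
    have h1 : limsup v F < limsup v F + ε / L := by linarith
    have h2 : ∀ᶠ s in F, v s < limsup v F + ε / L :=
      eventually_lt_of_limsup_lt h1 hbv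
    have h3 : ∀ᶠ s in F, u s ≤ L * (limsup v F + ε / L) := by
      filter_upwards [h2] with s hs
      exact (huv s).trans (by nlinarith)
    have h4 := limsup_le_of_le hcu h3
    calc limsup u F ≤ L * (limsup v F + ε / L) := h4
      _ = L * limsup v F + ε := by field_simp
  · rw [not_neBot] at hne
    subst hne
    rw [real_limsup_bot, real_limsup_bot, mul_zero]

lemma ae_boundedUnder (γ : Curve Z) (hγ : IsAC2 γ) :
    ∀ᵐ t ∂(volume.restrict (Icc (0:ℝ) 1)),
      IsBoundedUnder (· ≤ ·) (𝓝[≠] (pr t))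
        (fun s : unitInterval => dist (γ s) (γ (pr t)) / dist s (pr t)) := by
  obtain ⟨G, hG0, hG2, hGd⟩ := hγ
  have hGint : IntegrableOn G (Icc (0:ℝ) 1) := hG2.integrable (by norm_num)
  set g : ℝ → ℝ := (Icc (0:ℝ) 1).indicator G with hg
  have hg0 : ∀ x, 0 ≤ g x := fun x => Set.indicator_nonneg (fun y _ => hG0 y) x
  have hgint : Integrable g := (integrable_indicator_iff measurableSet_Icc).2 hGint
  have hav := (Besicovitch.vitaliFamily (volume : Measure ℝ)).ae_tendsto_average
      hgint.locallyIntegrable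
  filter_upwards [ae_restrict_of_ae hav, ae_restrict_mem measurableSet_Icc] with t ht htI
  have htcb : Tendsto (fun r => ⨍ y in closedBall t r, g y) (𝓝[>] (0:ℝ)) (𝓝 (g t)) :=
    ht.comp (Besicovitch.tendsto_filterAt volume t)
  have h2 : ∀ᶠ r in 𝓝[>] (0:ℝ), (⨍ y in closedBall t r, g y) < g t + 1 :=
    htcb.eventually_lt_const (by linarith)
  rw [eventually_nhdsWithin_iff, Metric.eventually_nhds_iff] at h2
  obtain ⟨δ, hδ0, hδ⟩ := h2
  have ht' : ((pr t : unitInterval) : ℝ) = t := by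
    rw [pr, Set.projIcc_of_mem _ htI]
  set t' : unitInterval := pr t
  refine ⟨2 * (g t + 1), ?_⟩
  rw [eventually_map]
  have hev1 : ∀ᶠ s : unitInterval in 𝓝[≠] t', dist s t' < δ :=
    eventually_nhdsWithin_of_eventually_nhds
      (Metric.eventually_nhds_iff.2 ⟨δ, hδ0, fun x hx => hx⟩)
  have hev2 : ∀ᶠ s : unitInterval in 𝓝[≠] t', s ≠ t' := eventually_mem_nhdsWithin
  filter_upwards [hev1, hev2] with s hsδ hsne
  set r : ℝ := dist s t' with hrdef
  have hr0 : 0 < r := dist_pos.2 hsne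
  have hrd : r = |(s : ℝ) - t| := by
    rw [hrdef, Subtype.dist_eq, Real.dist_eq, ht']
  have hcb : (⨍ y in closedBall t r, g y) < g t + 1 := by
    apply hδ
    · rw [Real.dist_eq, sub_zero, abs_of_pos hr0]; exact hsδ
    · exact mem_Ioi.2 hr0
  have havg : ∫ x in closedBall t r, g x ≤ 2 * r * (g t + 1) := by
    have hm' : (volume (closedBall t r)).toReal = 2 * r := by
      rw [Real.volume_closedBall, toReal_ofReal (by linarith)]
    have he : ∫ x in closedBall t r, g x = 2 * r * ⨍ y in closedBall t r, g y := by
      rw [setAverage_eq, measureReal_def, hm', smul_eq_mul]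
      field_simp
    rw [he]
    nlinarith [hcb]
  have hsub : ∀ a b : ℝ, a ∈ Icc (0:ℝ) 1 → b ∈ Icc (0:ℝ) 1 →
      |a - t| ≤ r → |b - t| ≤ r → a ≤ b →
      ∫ x in a..b, G x ≤ ∫ x in closedBall t r, g x := by
    intro a b haI hbI har hbr hab
    rw [intervalIntegral.integral_of_le hab]
    have heq : ∫ x in Ioc a b, G x = ∫ x in Ioc a b, g x := by
      apply setIntegral_congr_fun measurableSet_Ioc
      intro x hx
      have hxI : x ∈ Icc (0:ℝ) 1 := ⟨haI.1.trans hx.1.le, hx.2.trans hbI.2⟩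
      simp [hg, Set.indicator_of_mem hxI]
    rw [heq]
    apply setIntegral_mono_set hgint.integrableOn
      (Eventually.of_forall fun x => hg0 x)
    apply HasSubset.Subset.eventuallyLE
    intro x hx
    rw [Real.closedBall_eq_Icc]
    constructor
    · have := abs_le.1 har
      linarith [hx.1]
    · have := abs_le.1 hbr
      linarith [hx.2]
  have hdist : dist (γ s) (γ t') ≤ 2 * r * (g t + 1) := by
    rcases le_total s t' with hle | hle
    · have h1 := hGd s t' hle
      have hle' : (s:ℝ) ≤ t := by rw [← ht']; exact_mod_cast hle
      refine h1.trans ((?_ : ∫ x in (s:ℝ)..((t':unitInterval):ℝ), G x ≤ _).trans havg)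
      rw [ht']
      refine hsub _ _ s.2 htI ?_ ?_ hle'
      · exact hrd.ge
      · simpa using hr0.le
    · have h1 := hGd t' s hle
      have hle' : t ≤ (s:ℝ) := by rw [← ht']; exact_mod_cast hle
      rw [dist_comm]
      refine h1.trans ((?_ : ∫ x in ((t':unitInterval):ℝ)..((s:unitInterval):ℝ), G x ≤ _).trans havg)
      rw [ht']
      refine hsub _ _ htI s.2 ?_ ?_ hle'
      · simpa using hr0.le
      · exact hrd.ge
  rw [div_le_iff₀ hr0]
  calc dist (γ s) (γ t') ≤ 2 * r * (g t + 1) := hdist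
    _ = 2 * (g t + 1) * r := by ring

variable {W : Type*} [MetricSpace W]

lemma speed_comp_le {L : ℝ} (hL : 0 < L) (φ : C(Z, W))
    (hφ : ∀ a b : Z, dist (φ a) (φ b) ≤ L * dist a b)
    (γ : Curve Z) (t : unitInterval)
    (hb : IsBoundedUnder (· ≤ ·) (𝓝[≠] t)
      (fun s : unitInterval => dist (γ s) (γ t) / dist s t)) :
    speed (φ.comp γ) t ≤ L * speed γ t := by
  apply limsup_le_mul_limsup hL
    (fun s => div_nonneg dist_nonneg dist_nonneg) _ hb
  intro s
  rcases eq_or_lt_of_le (dist_nonneg : (0:ℝ) ≤ dist s t) with h0 | h0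
  · simp [← h0]
  · rw [← mul_div_assoc]
    exact div_le_div_of_nonneg_right (hφ _ _) h0.le |>.trans le_rfl

lemma isAC2_comp {L : ℝ} (hL : 0 < L) (φ : C(Z, W))
    (hφ : ∀ a b : Z, dist (φ a) (φ b) ≤ L * dist a b)
    (γ : Curve Z) (hγ : IsAC2 γ) : IsAC2 (φ.comp γ) := by
  obtain ⟨G, hG0, hG2, hGd⟩ := hγ
  refine ⟨fun x => L * G x, fun x => mul_nonneg hL.le (hG0 x), hG2.const_mul L, ?_⟩
  intro s t hst
  calc dist ((φ.comp γ) s) ((φ.comp γ) t) ≤ L * dist (γ s) (γ t) := hφ _ _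
    _ ≤ L * ∫ x in (s:ℝ)..(t:ℝ), G x := by
        exact mul_le_mul_of_nonneg_left (hGd s t hst) hL.le
    _ = ∫ x in (s:ℝ)..(t:ℝ), L * G x := (intervalIntegral.integral_const_mul _ _).symm

lemma ae_speed_comp {L : ℝ} (hL : 0 < L) (φ : C(Z, W))
    (hφ : ∀ a b : Z, dist (φ a) (φ b) ≤ L * dist a b)
    (γ : Curve Z) (hγ : IsAC2 γ) :
    ∀ᵐ t ∂(volume.restrict (Icc (0:ℝ) 1)),
      speedR (φ.comp γ) t ≤ L * speedR γ t := by
  filter_upwards [ae_boundedUnder γ hγ] with t ht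
  exact speed_comp_le hL φ hφ γ (pr t) ht

end AuxLemmas

/-- **Lemma (comparison of Sobolev classes).**
If on the same underlying set (`X₂ ≃ X₁` via `e`) one has two metric measure structures
with `m₂ ≤ C·m₁` and `d₁ ≤ L·d₂`, then `S(X₁) ⊂ S(X₂)` and `|Df|₂ ≤ L·|Df|₁`
holds `m₂`-a.e. for every `f ∈ S(X₁)`. -/
theorem sobolev_class_comparison
    {X₁ : Type*} [MetricSpace X₁] [CompleteSpace X₁] [TopologicalSpace.SeparableSpace X₁]
    [MeasurableSpace X₁] [BorelSpace X₁]
    {X₂ : Type*} [MetricSpace X₂] [CompleteSpace X₂] [TopologicalSpace.SeparableSpace X₂]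
    [MeasurableSpace X₂] [BorelSpace X₂]
    (h₁ : IsLengthSpace X₁) (h₂ : IsLengthSpace X₂)
    (μ₁ : Measure X₁) (hμ₁ : GoodMeasure μ₁) (μ₂ : Measure X₂) (hμ₂ : GoodMeasure μ₂)
    (e : X₂ ≃ X₁)
    (C : ℝ≥0∞) (hC : 0 < C ∧ C < ⊤) (hm : Measure.map e μ₂ ≤ C • μ₁)
    (L : ℝ) (hL : 0 < L) (hd : ∀ a b : X₂, dist (e a) (e b) ≤ L * dist a b) :
    (∀ f : X₁ → ℝ, MemS2 μ₁ f → MemS2 μ₂ (fun a => f (e a)))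
    ∧
    (∀ (f : X₁ → ℝ) (G₁ : X₁ → ℝ) (G₂ : X₂ → ℝ), MemS2 μ₁ f →
      IsMinWUG μ₁ f G₁ → IsMinWUG μ₂ (fun a => f (e a)) G₂ →
      ∀ᵐ a ∂μ₂, G₂ a ≤ L * G₁ (e a)) := by
  -- Setup: the map on curves induced by `e`
  have he_lip : LipschitzWith (Real.toNNReal L) (e : X₂ → X₁) :=
    LipschitzWith.of_dist_le' hd
  have he_cont : Continuous (e : X₂ → X₁) := he_lip.continuous
  have he_meas : Measurable (e : X₂ → X₁) := he_cont.measurable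
  set φ : C(X₂, X₁) := ⟨fun a => e a, he_cont⟩ with hφdef
  have hφd : ∀ a b : X₂, dist (φ a) (φ b) ≤ L * dist a b := hd
  set E : Curve X₂ → Curve X₁ := fun γ => φ.comp γ with hEdef
  have hE_cont : Continuous E := φ.continuous_postcomp
  have hE_inj : Function.Injective E := by
    intro γ₁ γ₂ h
    ext s
    exact e.injective (congrArg (fun ψ : Curve X₁ => ψ s) h)
  have hE : MeasurableEmbedding E := hE_cont.measurableEmbedding hE_inj
  have hev_meas : ∀ t : unitInterval, Measurable (ev t : Curve X₂ → X₂) :=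
    fun t => (continuous_eval_const t).measurable
  have hev_meas₁ : ∀ t : unitInterval, Measurable (ev t : Curve X₁ → X₁) :=
    fun t => (continuous_eval_const t).measurable
  -- absolute continuity
  have hmac : Measure.map (e : X₂ → X₁) μ₂ ≪ μ₁ := by
    refine Measure.AbsolutelyContinuous.mk fun s hs h0 => ?_
    have h1 : Measure.map (e : X₂ → X₁) μ₂ s ≤ (C • μ₁) s := Measure.le_iff'.1 hm s
    rw [Measure.smul_apply, smul_eq_mul, h0, mul_zero] at h1
    exact le_antisymm h1 zero_le
  -- the key transfer statement
  have transfer : ∀ f G : X₁ → ℝ, (∀ z, 0 ≤ G z) → MemLp G 2 μ₁ → IsWUG μ₁ f G →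
      (∀ a : X₂, 0 ≤ L * G (e a)) ∧ MemLp (fun a => L * G (e a)) 2 μ₂ ∧
        IsWUG μ₂ (fun a => f (e a)) (fun a => L * G (e a)) := by
    intro f G hG0 hGmem hGwug
    have hG2 : MemLp G 2 (Measure.map (e : X₂ → X₁) μ₂) :=
      (hGmem.smul_measure hC.2.ne).mono_measure hm
    have hGe : MemLp (G ∘ (e : X₂ → X₁)) 2 μ₂ :=
      (memLp_map_measure_iff hG2.aestronglyMeasurable he_meas.aemeasurable).1 hG2
    refine ⟨fun a => mul_nonneg hL.le (hG0 _), hGe.const_mul L, ?_⟩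
    intro π hπ
    haveI := hπ.prob
    set π' : Measure (Curve X₁) := Measure.map E π with hπ'def
    have hplan : IsTestPlan μ₁ π' := by
      constructor
      · exact Measure.isProbabilityMeasure_map hE.measurable.aemeasurable
      · rw [hE.ae_map_iff]
        filter_upwards [hπ.ac] with γ hγ
        exact isAC2_comp hL φ hφd γ hγ
      · rw [hπ'def, hE.lintegral_map]
        calc ∫⁻ γ, energyE (E γ) ∂π
            ≤ ∫⁻ γ, ENNReal.ofReal (L ^ 2) * energyE γ ∂π := by
              apply lintegral_mono_ae
              filter_upwards [hπ.ac] with γ hγ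
              have hsp := ae_speed_comp hL φ hφd γ hγ
              calc energyE (E γ)
                  ≤ ∫⁻ t in Icc (0:ℝ) 1,
                      ENNReal.ofReal (L ^ 2) * ENNReal.ofReal ((speedR γ t) ^ 2) := by
                    apply lintegral_mono_ae
                    filter_upwards [hsp] with t hts
                    rw [← ENNReal.ofReal_mul (sq_nonneg L)]
                    apply ENNReal.ofReal_le_ofReal
                    have h0 := speed_nonneg (φ.comp γ) (pr t)
                    have h1 := speed_nonneg γ (pr t)
                    have h2 : speedR (φ.comp γ) t = speed (φ.comp γ) (pr t) := rfl
                    nlinarith [hts]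
                _ = ENNReal.ofReal (L ^ 2) * energyE γ :=
                    lintegral_const_mul' _ _ ENNReal.ofReal_ne_top
          _ = ENNReal.ofReal (L ^ 2) * ∫⁻ γ, energyE γ ∂π :=
              lintegral_const_mul' _ _ ENNReal.ofReal_ne_top
          _ < ⊤ := ENNReal.mul_lt_top ENNReal.ofReal_lt_top hπ.finite_energy
      · obtain ⟨C₂, hC₂0, hC₂t, hC₂⟩ := hπ.compression
        refine ⟨C₂ * C, ENNReal.mul_pos hC₂0.ne' hC.1.ne', ENNReal.mul_lt_top hC₂t hC.2, fun t => ?_⟩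
        have h1 : π'.map (ev t) = Measure.map (e : X₂ → X₁) (π.map (ev t)) := by
          rw [hπ'def, Measure.map_map (hev_meas₁ t) hE.measurable,
            Measure.map_map he_meas (hev_meas t)]
          rfl
        rw [h1]
        calc Measure.map (e : X₂ → X₁) (π.map (ev t))
            ≤ Measure.map (e : X₂ → X₁) (C₂ • μ₂) := Measure.map_mono (hC₂ t) he_meas
          _ = C₂ • Measure.map (e : X₂ → X₁) μ₂ := Measure.map_smul _ _ _
          _ ≤ (C₂ * C) • μ₁ := by
              refine Measure.le_iff'.2 fun s => ?_
              simp only [Measure.smul_apply, smul_eq_mul, mul_assoc]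
              exact mul_le_mul_right (le_trans (Measure.le_iff'.1 hm s) (le_of_eq (by
                simp [Measure.smul_apply, smul_eq_mul]))) C₂
    calc ∫⁻ γ, ENNReal.ofReal |f (e (γ 1)) - f (e (γ 0))| ∂π
        = ∫⁻ σ, ENNReal.ofReal |f (σ 1) - f (σ 0)| ∂π' :=
          (hE.lintegral_map (fun σ => ENNReal.ofReal |f (σ 1) - f (σ 0)|)).symm
      _ ≤ ∫⁻ σ, (∫⁻ t in Icc (0:ℝ) 1,
            ENNReal.ofReal (G (σ (pr t)) * speedR σ t)) ∂π' := hGwug π' hplan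
      _ = ∫⁻ γ, (∫⁻ t in Icc (0:ℝ) 1,
            ENNReal.ofReal (G ((E γ) (pr t)) * speedR (E γ) t)) ∂π :=
          hE.lintegral_map _
      _ ≤ ∫⁻ γ, (∫⁻ t in Icc (0:ℝ) 1,
            ENNReal.ofReal ((L * G (e (γ (pr t)))) * speedR γ t)) ∂π := by
          apply lintegral_mono_ae
          filter_upwards [hπ.ac] with γ hγ
          apply lintegral_mono_ae
          filter_upwards [ae_speed_comp hL φ hφd γ hγ] with t hts
          apply ENNReal.ofReal_le_ofReal
          have h0 : 0 ≤ G (e (γ (pr t))) := hG0 _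
          calc G ((E γ) (pr t)) * speedR (E γ) t
              ≤ G (e (γ (pr t))) * (L * speedR γ t) :=
                mul_le_mul_of_nonneg_left hts h0
            _ = (L * G (e (γ (pr t)))) * speedR γ t := by ring
  constructor
  · rintro f ⟨hfm, G, hG0, hGmem, hGwug⟩
    obtain ⟨h1, h2, h3⟩ := transfer f G hG0 hGmem hGwug
    exact ⟨hfm.comp he_meas, fun a => L * G (e a), h1, h2, h3⟩
  · rintro f G₁ G₂ hf hmin1 hmin2
    obtain ⟨h1, h2, h3⟩ := transfer f G₁ hmin1.1 hmin1.2.1 hmin1.2.2.1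
    exact hmin2.2.2.2 _ h1 h2 h3


end MMS
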